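/- arXiv:2209.15254 — 3 statements merged into one kernel-verified Lean document; each statement's English description precedes it below -/
import Mathlib

section
/- Let (W,S) be a Coxeter system with finite hypergraph index h ≥ 1. Then there exists a proper subset T ⊊ S such that the subsystem (W_T, T) has hypergraph index exactly h − 1. Consequently, there exists a nested chain S ⊋ T₁ ⊋ T₂ ⊋ ⋯ ⊋ T_h with h(W_{T_i}, T_i) = h − i for each i. -/
open scoped Classical in
noncomputable section

variable {B W : Type*} [Group W] {M : CoxeterMatrix B}

/-- The special (standard parabolic) subgroup of `W` generated by the simple
reflections indexed by `T`. -/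
def CoxeterSystem.specialSubgroup (cs : CoxeterSystem M W) (T : Set B) : Subgroup W :=
  Subgroup.closure (cs.simple '' T)

/-- `T` is spherical if the special subgroup `W_T` is finite. -/
def CoxeterSystem.IsSpherical (cs : CoxeterSystem M W) (T : Set B) : Prop :=
  Finite (cs.specialSubgroup T)

/-- Two subsets of the generating set commute if each pair of simple reflections,
one from each, commutes in `W`. -/
def CoxeterSystem.SetsCommute (cs : CoxeterSystem M W) (A K : Set B) : Prop :=
  ∀ a ∈ A, ∀ k ∈ K, Commute (cs.simple a) (cs.simple k)

/-- `A` is minimal nonspherical: nonspherical, but every proper subset is spherical. -/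
def CoxeterSystem.MinimalNonspherical (cs : CoxeterSystem M W) (A : Set B) : Prop :=
  ¬ cs.IsSpherical A ∧ ∀ C ⊂ A, cs.IsSpherical C

/-- A subset `T` is irreducible if it admits no nontrivial partition into two
disjoint commuting subsets. -/
def CoxeterSystem.IsIrreducibleSubset (cs : CoxeterSystem M W) (T : Set B) : Prop :=
  ∀ A K : Set B, A ∪ K = T → Disjoint A K → cs.SetsCommute A K → A = ∅ ∨ K = ∅

/-- A subset `T` is affine-type if `W_T` is infinite and virtually abelian. -/
def CoxeterSystem.IsAffineSubset (cs : CoxeterSystem M W) (T : Set B) : Prop :=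
  ¬ cs.IsSpherical T ∧ ∃ A : Subgroup W, A ≤ cs.specialSubgroup T ∧
    (∀ x ∈ A, ∀ y ∈ A, Commute x y) ∧ A.relIndex (cs.specialSubgroup T) ≠ 0

/-- `T` is irreducible affine of rank at least `3`. -/
def CoxeterSystem.IsIrredAffineRankGE3 (cs : CoxeterSystem M W) (T : Set B) : Prop :=
  cs.IsIrreducibleSubset T ∧ cs.IsAffineSubset T ∧ 3 ≤ T.ncard

/-- The defining condition for wide subsets of the ambient subset `SS`:
`T = A × B` with `A`, `B` both nonspherical, or `A` irreducible affine of
rank `≥ 3` and `B` spherical (possibly empty). -/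
def CoxeterSystem.IsWidePre (cs : CoxeterSystem M W) (SS T : Set B) : Prop :=
  T ⊆ SS ∧ ∃ A K : Set B, T = A ∪ K ∧ Disjoint A K ∧ cs.SetsCommute A K ∧
    ((¬ cs.IsSpherical A ∧ ¬ cs.IsSpherical K) ∨
      (cs.IsIrredAffineRankGE3 A ∧ cs.IsSpherical K))

/-- The set `Ω(SS)` of wide subsets: the maximal elements of the collection above. -/
def CoxeterSystem.wide (cs : CoxeterSystem M W) (SS : Set B) : Set (Set B) :=
  {T | cs.IsWidePre SS T ∧ ∀ T', cs.IsWidePre SS T' → T ⊆ T' → T = T'}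

/-- The defining condition for slab subsets: `T = A × K` with `A` minimal
nonspherical, `K` nonempty spherical commuting with `A`, and `T` contained in no
wide subset. -/
def CoxeterSystem.IsSlabPre (cs : CoxeterSystem M W) (SS T : Set B) : Prop :=
  T ⊆ SS ∧ ∃ A K : Set B, T = A ∪ K ∧ Disjoint A K ∧ cs.SetsCommute A K ∧
    cs.MinimalNonspherical A ∧ K.Nonempty ∧ cs.IsSpherical K ∧
    ¬ ∃ T' ∈ cs.wide SS, T ⊆ T'

/-- The set `Ψ(SS)` of slab subsets: the maximal elements of the collection above. -/
def CoxeterSystem.slab (cs : CoxeterSystem M W) (SS : Set B) : Set (Set B) :=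
  {T | cs.IsSlabPre SS T ∧ ∀ T', cs.IsSlabPre SS T' → T ⊆ T' → T = T'}

/-- One step of the relation generating `≡ᵢ`: both sets belong to the given
collection and their intersection is nonspherical. -/
def CoxeterSystem.lambdaRel (cs : CoxeterSystem M W) (L : Set (Set B)) (T T' : Set B) : Prop :=
  T ∈ L ∧ T' ∈ L ∧ ¬ cs.IsSpherical (T ∩ T')

/-- The sets `Λᵢ(SS)` of the hypergraph index construction: `Λ₀ = Ω ∪ Ψ`, and
`Λᵢ₊₁` consists of the unions of the `≡ᵢ`-equivalence classes of `Λᵢ`. -/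
def CoxeterSystem.lambdaSet (cs : CoxeterSystem M W) (SS : Set B) : ℕ → Set (Set B)
  | 0 => cs.wide SS ∪ cs.slab SS
  | (i+1) => {U | ∃ T ∈ cs.lambdaSet SS i,
      U = ⋃₀ {T' | T' ∈ cs.lambdaSet SS i ∧
        Relation.EqvGen (cs.lambdaRel (cs.lambdaSet SS i)) T T'}}

/-- The hypergraph index of the subsystem on `SS`: the least `h` with
`SS ∈ Λ_h(SS)`, or `∞` if there is no such `h` or if `Ω(SS) = ∅`. -/
noncomputable def CoxeterSystem.hypergraphIndex (cs : CoxeterSystem M W) (SS : Set B) : ℕ∞ :=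
  if cs.wide SS = ∅ then ⊤
  else sInf {n : ℕ∞ | ∃ h : ℕ, n = (h : ℕ∞) ∧ SS ∈ cs.lambdaSet SS h}


open scoped Pointwise
set_option maxHeartbeats 1000000

namespace CoxeterSystem
variable (cs : CoxeterSystem M W)

theorem sph_mono {T T' : Set B} (hsub : T ⊆ T') (h : cs.IsSpherical T') : cs.IsSpherical T := by
  unfold IsSpherical at *
  rw [← SetLike.coe_sort_coe, Set.finite_coe_iff] at *
  exact h.subset (SetLike.coe_subset_coe.2 (Subgroup.closure_mono (Set.image_mono hsub)))

theorem nsph_mono {T T' : Set B} (h : ¬ cs.IsSpherical T) (hsub : T ⊆ T') :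
    ¬ cs.IsSpherical T' := fun h' => h (cs.sph_mono hsub h')

theorem setsCommute_mono {A K A' K' : Set B} (h : cs.SetsCommute A K) (hA : A' ⊆ A)
    (hK : K' ⊆ K) : cs.SetsCommute A' K' := fun a ha k hk => h a (hA ha) k (hK hk)

theorem sph_union {A K : Set B} (hc : cs.SetsCommute A K) (hA : cs.IsSpherical A)
    (hK : cs.IsSpherical K) : cs.IsSpherical (A ∪ K) := by
  unfold IsSpherical specialSubgroup at *
  set H := Subgroup.closure (cs.simple '' A) with hH
  set K' := Subgroup.closure (cs.simple '' K) with hK'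
  -- elementwise commuting
  have hcomm : ∀ x ∈ H, ∀ y ∈ K', Commute x y := by
    intro x hx
    have hxc : x ∈ Subgroup.centralizer (K' : Set W) := by
      revert x hx
      rw [← SetLike.le_def, hH]
      apply Subgroup.closure_le _ |>.2
      rintro _ ⟨a, ha, rfl⟩
      have : K' ≤ Subgroup.centralizer {cs.simple a} := by
        rw [hK']
        apply Subgroup.closure_le _ |>.2
        rintro _ ⟨k, hk, rfl⟩
        rw [SetLike.mem_coe, Subgroup.mem_centralizer_iff]
        rintro g hg
        rcases hg with rfl
        exact (hc a ha k hk).eq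
      rw [SetLike.mem_coe, Subgroup.mem_centralizer_iff]
      intro y hy
      have := this hy
      rw [Subgroup.mem_centralizer_iff] at this
      exact (this (cs.simple a) rfl).symm
    intro y hy
    rw [Subgroup.mem_centralizer_iff] at hxc
    exact (hxc y hy).symm
  -- the product set is a subgroup
  have hsub : ∀ x ∈ Subgroup.closure (cs.simple '' (A ∪ K)),
      ∃ h ∈ H, ∃ k ∈ K', x = h * k := by
      intro x hx
      rw [Set.image_union] at hx
      induction hx using Subgroup.closure_induction'' with
      | one => exact ⟨1, one_mem _, 1, one_mem _, (mul_one 1).symm⟩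
      | mem x hx =>
          rcases hx with hx | hx
          · exact ⟨x, Subgroup.subset_closure hx, 1, one_mem _, (mul_one x).symm⟩
          · exact ⟨1, one_mem _, x, Subgroup.subset_closure hx, (one_mul x).symm⟩
      | inv_mem x hx =>
          rcases hx with hx | hx
          · exact ⟨x⁻¹, inv_mem (Subgroup.subset_closure hx), 1, one_mem _, (mul_one _).symm⟩
          · exact ⟨1, one_mem _, x⁻¹, inv_mem (Subgroup.subset_closure hx), (one_mul _).symm⟩
      | mul x y _ _ ihx ihy =>
          rcases ihx with ⟨h1, hh1, k1, hk1, rfl⟩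
          rcases ihy with ⟨h2, hh2, k2, hk2, rfl⟩
          refine ⟨h1 * h2, mul_mem hh1 hh2, k1 * k2, mul_mem hk1 hk2, ?_⟩
          have hcm := (hcomm h2 hh2 k1 hk1).eq
          rw [mul_assoc h1, ← mul_assoc k1, hcm.symm, mul_assoc h2, ← mul_assoc h1]
  rw [← SetLike.coe_sort_coe, Set.finite_coe_iff] at *
  refine (Set.Finite.image2 (fun h k => h * k) hA hK).subset ?_
  intro x hx
  rcases hsub x hx with ⟨h, hh, k, hk, rfl⟩
  exact Set.mem_image2_of_mem hh hk

theorem widePre_nonspherical {SS T : Set B} (h : cs.IsWidePre SS T) : ¬ cs.IsSpherical T := by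
  obtain ⟨-, A, K, rfl, -, -, hcase⟩ := h
  rcases hcase with ⟨hA, -⟩ | ⟨⟨-, ⟨hA, -⟩, -⟩, -⟩ <;>
    exact cs.nsph_mono hA Set.subset_union_left

theorem slabPre_nonspherical {SS T : Set B} (h : cs.IsSlabPre SS T) : ¬ cs.IsSpherical T := by
  obtain ⟨-, A, K, rfl, -, -, ⟨hA, -⟩, -⟩ := h
  exact cs.nsph_mono hA Set.subset_union_left

theorem widePre_of_subset {SS SS' T : Set B} (h : cs.IsWidePre SS T) (hT : T ⊆ SS') :
    cs.IsWidePre SS' T := ⟨hT, h.2⟩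

theorem exists_wide_ext [Finite B] {SS Z : Set B} (h : cs.IsWidePre SS Z) :
    ∃ Z' ∈ cs.wide SS, Z ⊆ Z' := by
  obtain ⟨T, ⟨hT, hTZ⟩, hmax⟩ := Set.Finite.exists_maximalFor id
    {T | cs.IsWidePre SS T ∧ Z ⊆ T} (Set.toFinite _) ⟨Z, h, subset_rfl⟩
  exact ⟨T, ⟨hT, fun T' hT' hsub => hsub.antisymm (hmax ⟨hT', hTZ.trans hsub⟩ hsub)⟩, hTZ⟩

theorem exists_slab_ext [Finite B] {SS Z : Set B} (h : cs.IsSlabPre SS Z) :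
    ∃ Z' ∈ cs.slab SS, Z ⊆ Z' := by
  obtain ⟨T, ⟨hT, hTZ⟩, hmax⟩ := Set.Finite.exists_maximalFor id
    {T | cs.IsSlabPre SS T ∧ Z ⊆ T} (Set.toFinite _) ⟨Z, h, subset_rfl⟩
  exact ⟨T, ⟨hT, fun T' hT' hsub => hsub.antisymm (hmax ⟨hT', hTZ.trans hsub⟩ hsub)⟩, hTZ⟩

theorem lambda0_cases {SS T : Set B} (h : T ∈ cs.lambdaSet SS 0) :
    T ∈ cs.wide SS ∨ T ∈ cs.slab SS := h

theorem lambda_subset {SS : Set B} : ∀ (i : ℕ), ∀ T ∈ cs.lambdaSet SS i, T ⊆ SS := by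
  intro i
  induction i with
  | zero =>
      rintro T (⟨⟨h, -⟩, -⟩ | ⟨⟨h, -⟩, -⟩) <;> exact h
  | succ i ih =>
      rintro T ⟨T₀, hT₀, rfl⟩
      intro x hx
      rw [Set.mem_sUnion] at hx
      obtain ⟨t, ⟨ht, -⟩, hxt⟩ := hx
      exact ih t ht hxt

theorem lambda_nonspherical {SS : Set B} :
    ∀ (i : ℕ), ∀ T ∈ cs.lambdaSet SS i, ¬ cs.IsSpherical T := by
  intro i
  induction i with
  | zero =>
      rintro T (⟨h, -⟩ | ⟨h, -⟩)
      · exact cs.widePre_nonspherical h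
      · exact cs.slabPre_nonspherical h
  | succ i ih =>
      rintro T ⟨T₀, hT₀, rfl⟩
      refine cs.nsph_mono (ih T₀ hT₀) ?_
      exact Set.subset_sUnion_of_mem ⟨hT₀, Relation.EqvGen.refl T₀⟩

/-- Every `Λᵢ` element is contained in a `Λⱼ` element for `i ≤ j`. -/
theorem lambda_up {SS : Set B} {i j : ℕ} (hij : i ≤ j) {T : Set B}
    (h : T ∈ cs.lambdaSet SS i) : ∃ Y ∈ cs.lambdaSet SS j, T ⊆ Y := by
  induction j with
  | zero =>
      obtain rfl : i = 0 := Nat.le_zero.mp hij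
      exact ⟨T, h, subset_rfl⟩
  | succ j ihj =>
      rcases Nat.lt_or_ge i (j+1) with hlt | hge
      · obtain ⟨Y, hY, hTY⟩ := ihj (Nat.lt_succ_iff.mp hlt)
        refine ⟨⋃₀ {T' | T' ∈ cs.lambdaSet SS j ∧
            Relation.EqvGen (cs.lambdaRel (cs.lambdaSet SS j)) Y T'}, ⟨Y, hY, rfl⟩, ?_⟩
        exact hTY.trans (Set.subset_sUnion_of_mem ⟨hY, Relation.EqvGen.refl Y⟩)
      · obtain rfl : i = j + 1 := le_antisymm hij hge
        exact ⟨T, h, subset_rfl⟩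

/-- Mapping lemma for `EqvGen` chains out of a fixed base point. -/
theorem eqvGen_map {α : Type*} {r r' : α → α → Prop} {f : α → α} {T₀ : α}
    (H : ∀ a b, Relation.EqvGen r T₀ a → r a b → r' (f a) (f b)) :
    ∀ b, Relation.EqvGen r T₀ b → Relation.EqvGen r' (f T₀) (f b) := by
  have main : ∀ a b, Relation.EqvGen r a b →
      (Relation.EqvGen r T₀ a → Relation.EqvGen r' (f a) (f b)) := by
    intro a b hab
    induction hab with
    | rel a b hr => exact fun h => Relation.EqvGen.rel _ _ (H a b h hr)
    | refl a => exact fun _ => Relation.EqvGen.refl (f a)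
    | symm a b hab ih =>
        intro hTb
        exact (ih (hTb.trans _ _ _ hab.symm)).symm _ _
    | trans a b c hab hbc ihab ihbc =>
        intro hTa
        exact (ihab hTa).trans _ _ _ (ihbc (hTa.trans _ _ _ hab))
  exact fun b hb => main T₀ b hb (Relation.EqvGen.refl T₀)

/-- From a nontrivial `EqvGen` chain, one can extract an actual relation step. -/
theorem eqvGen_extract {α : Type*} {r : α → α → Prop} {a b : α}
    (h : Relation.EqvGen r a b) :
    a = b ∨ ∃ x y, Relation.EqvGen r a x ∧ r x y ∧ x ≠ y := by
  induction h with
  | rel a b hr =>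
      by_cases hab : a = b
      · exact Or.inl hab
      · exact Or.inr ⟨a, b, Relation.EqvGen.refl a, hr, hab⟩
  | refl a => exact Or.inl rfl
  | symm a b hab ih =>
      rcases ih with rfl | ⟨x, y, hax, hr, hne⟩
      · exact Or.inl rfl
      · exact Or.inr ⟨x, y, (hab.symm _ _).trans _ _ _ hax, hr, hne⟩
  | trans a b c hab hbc ihab ihbc =>
      rcases ihbc with rfl | ⟨x, y, hbx, hr, hne⟩
      · exact ihab
      · exact Or.inr ⟨x, y, hab.trans _ _ _ hbx, hr, hne⟩

/-- Monotonicity at level 0. -/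
theorem lambda0_mono [Finite B] {T S Y : Set B} (hTS : T ⊆ S)
    (hY : Y ∈ cs.lambdaSet T 0) : ∃ Y' ∈ cs.lambdaSet S 0, Y ⊆ Y' := by
  rcases hY with ⟨hpre, -⟩ | ⟨hpre, -⟩
  · obtain ⟨Z', hZ', hsub⟩ := cs.exists_wide_ext
      (cs.widePre_of_subset hpre (hpre.1.trans hTS))
    exact ⟨Z', Or.inl hZ', hsub⟩
  · by_cases hw : ∃ T' ∈ cs.wide S, Y ⊆ T'
    · obtain ⟨T', hT', hsub⟩ := hw
      exact ⟨T', Or.inl hT', hsub⟩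
    · obtain ⟨hYT, A, K, hdecomp, hdisj, hcomm, hmin, hne, hsph, -⟩ := hpre
      obtain ⟨Z', hZ', hsub⟩ := cs.exists_slab_ext
        (⟨hYT.trans hTS, A, K, hdecomp, hdisj, hcomm, hmin, hne, hsph, hw⟩ :
          cs.IsSlabPre S Y)
      exact ⟨Z', Or.inr hZ', hsub⟩

/-- Monotonicity: elements of `Λᵢ(T)` extend to elements of `Λᵢ(S)` for `T ⊆ S`. -/
theorem lambda_mono [Finite B] {T S : Set B} (hTS : T ⊆ S) :
    ∀ (i : ℕ), ∀ Y ∈ cs.lambdaSet T i, ∃ Y' ∈ cs.lambdaSet S i, Y ⊆ Y' := by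
  intro i
  induction i with
  | zero => exact fun Y hY => cs.lambda0_mono hTS hY
  | succ i ih =>
      rintro Y ⟨T₀, hT₀, rfl⟩
      classical
      set ext : Set B → Set B := fun X =>
        if h : ∃ Z ∈ cs.lambdaSet S i, X ⊆ Z then h.choose else X with hext
      have hextP : ∀ X ∈ cs.lambdaSet T i, ext X ∈ cs.lambdaSet S i ∧ X ⊆ ext X := by
        intro X hX
        have h : ∃ Z ∈ cs.lambdaSet S i, X ⊆ Z := ih X hX
        rw [hext]
        simp only [dif_pos h]
        exact ⟨h.choose_spec.1, h.choose_spec.2⟩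
      have hmap : ∀ b, Relation.EqvGen (cs.lambdaRel (cs.lambdaSet T i)) T₀ b →
          Relation.EqvGen (cs.lambdaRel (cs.lambdaSet S i)) (ext T₀) (ext b) := by
        refine eqvGen_map ?_
        rintro a b - ⟨ha, hb, hns⟩
        obtain ⟨hea, hae⟩ := hextP a ha
        obtain ⟨heb, hbe⟩ := hextP b hb
        exact ⟨hea, heb, cs.nsph_mono hns (Set.inter_subset_inter hae hbe)⟩
      have hT₀' := hextP T₀ hT₀
      refine ⟨⋃₀ {T' | T' ∈ cs.lambdaSet S i ∧
          Relation.EqvGen (cs.lambdaRel (cs.lambdaSet S i)) (ext T₀) T'},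
        ⟨ext T₀, hT₀'.1, rfl⟩, ?_⟩
      intro x hx
      rw [Set.mem_sUnion] at hx ⊢
      obtain ⟨X, ⟨hX, hchain⟩, hxX⟩ := hx
      exact ⟨ext X, ⟨(hextP X hX).1, hmap X hchain⟩, (hextP X hX).2 hxX⟩

/-- Restriction at level 0. -/
theorem lambda0_restrict [Finite B] {S T X : Set B} (hX : X ∈ cs.lambdaSet S 0)
    (hXT : X ⊆ T) (hTS : T ⊆ S) : X ∈ cs.lambdaSet T 0 := by
  rcases hX with ⟨hpre, hmax⟩ | ⟨hpre, hmax⟩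
  · refine Or.inl ⟨cs.widePre_of_subset hpre hXT, ?_⟩
    intro X' hX' hsub
    exact hmax X' (cs.widePre_of_subset hX' (hX'.1.trans hTS)) hsub
  · obtain ⟨hXS, A, K, hdecomp, hdisj, hcomm, hmin, hne, hsph, hnw⟩ := hpre
    have hclause : ∀ X' : Set B, X ⊆ X' → ¬ ∃ T' ∈ cs.wide S, X' ⊆ T' := by
      rintro X' hXX' ⟨T', hT', hsub⟩
      exact hnw ⟨T', hT', hXX'.trans hsub⟩
    refine Or.inr ⟨⟨hXT, A, K, hdecomp, hdisj, hcomm, hmin, hne, hsph, ?_⟩, ?_⟩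
    · rintro ⟨T', hT', hsub⟩
      obtain ⟨T'', hT'', hsub'⟩ := cs.exists_wide_ext
        (cs.widePre_of_subset hT'.1 (hT'.1.1.trans hTS))
      exact hnw ⟨T'', hT'', hsub.trans hsub'⟩
    · intro X' hX' hsub
      obtain ⟨hX'T, A', K', hd', hdj', hc', hm', hn', hs', -⟩ := hX'
      exact hmax X' ⟨hX'T.trans hTS, A', K', hd', hdj', hc', hm', hn', hs',
        hclause X' hsub⟩ hsub

/-- Restriction: an element of `Λᵢ(S)` contained in `T ⊆ S` lies in `Λᵢ(T)`. -/
theorem lambda_restrict [Finite B] {S : Set B} :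
    ∀ (i : ℕ), ∀ {T X : Set B}, X ∈ cs.lambdaSet S i → X ⊆ T → T ⊆ S →
      X ∈ cs.lambdaSet T i := by
  intro i
  induction i with
  | zero => exact fun hX hXT hTS => cs.lambda0_restrict hX hXT hTS
  | succ i ih =>
      rintro T X ⟨X₀, hX₀, rfl⟩ hXT hTS
      set X : Set B := ⋃₀ {T' | T' ∈ cs.lambdaSet S i ∧
        Relation.EqvGen (cs.lambdaRel (cs.lambdaSet S i)) X₀ T'} with hXdef
      have hmemX : ∀ Z : Set B, Z ∈ cs.lambdaSet S i →
          Relation.EqvGen (cs.lambdaRel (cs.lambdaSet S i)) X₀ Z → Z ⊆ X := by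
        intro Z hZ hch
        exact Set.subset_sUnion_of_mem ⟨hZ, hch⟩
      have hClam : ∀ Z : Set B, Z ∈ cs.lambdaSet S i →
          Relation.EqvGen (cs.lambdaRel (cs.lambdaSet S i)) X₀ Z →
          Z ∈ cs.lambdaSet T i :=
        fun Z hZ hch => ih hZ ((hmemX Z hZ hch).trans hXT) hTS
      have hX₀T : X₀ ∈ cs.lambdaSet T i :=
        hClam X₀ hX₀ (Relation.EqvGen.refl X₀)
      -- forward chain transfer
      have hfwd : ∀ b, Relation.EqvGen (cs.lambdaRel (cs.lambdaSet S i)) X₀ b →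
          Relation.EqvGen (cs.lambdaRel (cs.lambdaSet T i)) X₀ b := by
        have := eqvGen_map (r := cs.lambdaRel (cs.lambdaSet S i))
          (r' := cs.lambdaRel (cs.lambdaSet T i)) (f := id) (T₀ := X₀) ?_
        · exact fun b hb => this b hb
        · rintro a b hTa ⟨ha, hb, hns⟩
          have hTb := hTa.trans _ _ _ (Relation.EqvGen.rel _ _ ⟨ha, hb, hns⟩)
          exact ⟨hClam a ha hTa, hClam b hb hTb, hns⟩
      -- reverse: members of the `T`-class stay inside `X`
      classical
      set ext : Set B → Set B := fun Z =>
        if h : ∃ Z' ∈ cs.lambdaSet S i, Z ⊆ Z' then h.choose else Z with hext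
      have hextP : ∀ Z ∈ cs.lambdaSet T i, ext Z ∈ cs.lambdaSet S i ∧ Z ⊆ ext Z := by
        intro Z hZ
        have h : ∃ Z' ∈ cs.lambdaSet S i, Z ⊆ Z' := cs.lambda_mono hTS i Z hZ
        rw [hext]
        simp only [dif_pos h]
        exact ⟨h.choose_spec.1, h.choose_spec.2⟩
      have hbwd : ∀ Z, Z ∈ cs.lambdaSet T i →
          Relation.EqvGen (cs.lambdaRel (cs.lambdaSet T i)) X₀ Z → Z ⊆ X := by
        intro Z hZ hch
        have hmap := eqvGen_map (r := cs.lambdaRel (cs.lambdaSet T i))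
          (r' := cs.lambdaRel (cs.lambdaSet S i)) (f := ext) (T₀ := X₀) ?_ Z hch
        · have hrel0 : cs.lambdaRel (cs.lambdaSet S i) X₀ (ext X₀) := by
            refine ⟨hX₀, (hextP X₀ hX₀T).1, ?_⟩
            refine cs.nsph_mono (cs.lambda_nonspherical i X₀ hX₀) ?_
            exact Set.subset_inter subset_rfl (hextP X₀ hX₀T).2
          have : Relation.EqvGen (cs.lambdaRel (cs.lambdaSet S i)) X₀ (ext Z) :=
            (Relation.EqvGen.rel _ _ hrel0).trans _ _ _ hmap
          exact (hextP Z hZ).2.trans (hmemX (ext Z) (hextP Z hZ).1 this)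
        · rintro a b - ⟨ha, hb, hns⟩
          exact ⟨(hextP a ha).1, (hextP b hb).1,
            cs.nsph_mono hns (Set.inter_subset_inter (hextP a ha).2 (hextP b hb).2)⟩
      show ∃ T₀ ∈ cs.lambdaSet T i, X = ⋃₀ {T' | T' ∈ cs.lambdaSet T i ∧
        Relation.EqvGen (cs.lambdaRel (cs.lambdaSet T i)) T₀ T'}
      refine ⟨X₀, hX₀T, ?_⟩
      apply Set.Subset.antisymm
      · intro x hx
        rw [Set.mem_sUnion] at hx
        obtain ⟨Z, ⟨hZ, hch⟩, hxZ⟩ := hx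
        have hm : Z ∈ {T' | T' ∈ cs.lambdaSet T i ∧
            Relation.EqvGen (cs.lambdaRel (cs.lambdaSet T i)) X₀ T'} :=
          ⟨hClam Z hZ hch, hfwd Z hch⟩
        exact Set.subset_sUnion_of_mem hm hxZ
      · intro x hx
        rw [Set.mem_sUnion] at hx
        obtain ⟨Z, ⟨hZ, hch⟩, hxZ⟩ := hx
        exact hbwd Z hZ hch hxZ

theorem nsph_inter {U A K : Set B} (hU : U ⊆ A ∪ K) (hc : cs.SetsCommute A K)
    (hK : cs.IsSpherical K) (hns : ¬ cs.IsSpherical U) : ¬ cs.IsSpherical (U ∩ A) := by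
  intro hUA
  apply hns
  have h1 : cs.IsSpherical (U ∩ K) := cs.sph_mono Set.inter_subset_right hK
  have h2 : cs.IsSpherical ((U ∩ A) ∪ (U ∩ K)) :=
    cs.sph_union (cs.setsCommute_mono hc Set.inter_subset_right Set.inter_subset_right)
      hUA h1
  refine cs.sph_mono ?_ h2
  intro x hx
  rcases hU hx with h | h
  · exact Or.inl ⟨hx, h⟩
  · exact Or.inr ⟨hx, h⟩

theorem minimal_eq {A D : Set B} (hm : cs.MinimalNonspherical A) (hD : D ⊆ A)
    (hns : ¬ cs.IsSpherical D) : D = A := by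
  by_contra hne
  exact hns (hm.2 D (ssubset_of_subset_of_ne hD hne))

/-- Two distinct slabs with nonspherical intersection produce a wide-pre subset
of their union. -/
theorem slab_pair {SS X Y : Set B} (hX : X ∈ cs.slab SS) (hY : Y ∈ cs.slab SS)
    (hne : X ≠ Y) (hns : ¬ cs.IsSpherical (X ∩ Y)) :
    ∃ Z, cs.IsWidePre (X ∪ Y) Z := by
  obtain ⟨hXpre, hmaxX⟩ := hX
  obtain ⟨hYpre, hmaxY⟩ := hY
  obtain ⟨hXS, A1, K1, hX1, hd1, hc1, hm1, hn1, hs1, hnw1⟩ := hXpre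
  obtain ⟨hYS, A2, K2, hY2, hd2, hc2, hm2, hn2, hs2, hnw2⟩ := hYpre
  -- `A1 ⊆ Y` and `A2 ⊆ X`
  have hA1Y : A1 ⊆ Y := by
    have h1 : ¬ cs.IsSpherical ((X ∩ Y) ∩ A1) := by
      refine cs.nsph_inter ?_ hc1 hs1 hns
      exact (Set.inter_subset_left).trans hX1.subset
    have := cs.minimal_eq hm1 Set.inter_subset_right h1
    rw [← this]
    exact (Set.inter_subset_left).trans Set.inter_subset_right
  have hA2X : A2 ⊆ X := by
    have h1 : ¬ cs.IsSpherical ((X ∩ Y) ∩ A2) := by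
      refine cs.nsph_inter ?_ hc2 hs2 hns
      exact (Set.inter_subset_right).trans hY2.subset
    have := cs.minimal_eq hm2 Set.inter_subset_right h1
    rw [← this]
    exact (Set.inter_subset_left).trans Set.inter_subset_left
  -- `A1 = A2`
  have hA12 : A1 = A2 := by
    have hsub : A1 ⊆ A2 ∪ K2 := fun x hx => hY2 ▸ hA1Y hx
    have h1 : ¬ cs.IsSpherical (A1 ∩ A2) := by
      have := cs.nsph_inter hsub hc2 hs2 hm1.1
      exact this
    have e1 : A1 ∩ A2 = A1 := cs.minimal_eq hm1 Set.inter_subset_left h1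
    have e2 : A1 ∩ A2 = A2 := cs.minimal_eq hm2 Set.inter_subset_right h1
    rw [← e1, e2]
  -- the union decomposition
  have hdecomp : X ∪ Y = A1 ∪ (K1 ∪ K2) := by
    rw [hX1, hY2, ← hA12]
    ext x; constructor
    · rintro ((h | h) | (h | h))
      · exact Or.inl h
      · exact Or.inr (Or.inl h)
      · exact Or.inl h
      · exact Or.inr (Or.inr h)
    · rintro (h | (h | h))
      · exact Or.inl (Or.inl h)
      · exact Or.inl (Or.inr h)
      · exact Or.inr (Or.inr h)
  have hdisj : Disjoint A1 (K1 ∪ K2) := by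
    rw [Set.disjoint_union_right]
    exact ⟨hd1, hA12 ▸ hd2⟩
  have hcomm : cs.SetsCommute A1 (K1 ∪ K2) := by
    intro a ha k hk
    rcases hk with hk | hk
    · exact hc1 a ha k hk
    · exact hc2 a (hA12 ▸ ha) k hk
  by_cases hsK : cs.IsSpherical (K1 ∪ K2)
  · -- then `X ∪ Y` would be a larger slab-pre set, contradicting maximality
    exfalso
    have hXYpre : cs.IsSlabPre SS (X ∪ Y) := by
      refine ⟨Set.union_subset hXS hYS, A1, K1 ∪ K2, hdecomp, hdisj, hcomm, hm1,
        hn1.mono Set.subset_union_left, hsK, ?_⟩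
      rintro ⟨T', hT', hsub⟩
      exact hnw1 ⟨T', hT', Set.subset_union_left.trans hsub⟩
    have hXeq : X = X ∪ Y := hmaxX (X ∪ Y) hXYpre Set.subset_union_left
    have hYX : Y ⊆ X := hXeq ▸ Set.subset_union_right
    exact hne ((hmaxY X ⟨hXS, A1, K1, hX1, hd1, hc1, hm1, hn1, hs1, hnw1⟩ hYX).symm)
  · exact ⟨X ∪ Y, subset_rfl, A1, K1 ∪ K2, hdecomp, hdisj, hcomm,
      Or.inl ⟨hm1.1, hsK⟩⟩

/-- Every `Λᵢ` element either contains a wide-pre subset or is itself a slab. -/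
theorem wide_or_slab [Finite B] {SS : Set B} :
    ∀ (i : ℕ), ∀ U ∈ cs.lambdaSet SS i, (∃ Z, cs.IsWidePre U Z) ∨ U ∈ cs.slab SS := by
  intro i
  induction i with
  | zero =>
      rintro U (⟨hpre, -⟩ | hslab)
      · exact Or.inl ⟨U, cs.widePre_of_subset hpre subset_rfl⟩
      · exact Or.inr hslab
  | succ i ih =>
      rintro U ⟨T₀, hT₀, rfl⟩
      set U : Set B := ⋃₀ {T' | T' ∈ cs.lambdaSet SS i ∧
        Relation.EqvGen (cs.lambdaRel (cs.lambdaSet SS i)) T₀ T'} with hUdef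
      have hmemU : ∀ Z : Set B, Z ∈ cs.lambdaSet SS i →
          Relation.EqvGen (cs.lambdaRel (cs.lambdaSet SS i)) T₀ Z → Z ⊆ U :=
        fun Z hZ hch => Set.subset_sUnion_of_mem ⟨hZ, hch⟩
      by_cases hw : ∃ Z, cs.IsWidePre U Z
      · exact Or.inl hw
      · have hall : ∀ Z, Z ∈ cs.lambdaSet SS i →
            Relation.EqvGen (cs.lambdaRel (cs.lambdaSet SS i)) T₀ Z → Z = T₀ := by
          intro Z hZ hch
          rcases eqvGen_extract hch with h | ⟨x, y, hx, ⟨hxm, hym, hxy⟩, hnexy⟩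
          · exact h.symm
          · exfalso
            have hyc : Relation.EqvGen (cs.lambdaRel (cs.lambdaSet SS i)) T₀ y :=
              hx.trans _ _ _ (Relation.EqvGen.rel _ _ ⟨hxm, hym, hxy⟩)
            have hxU : x ⊆ U := hmemU x hxm hx
            have hyU : y ⊆ U := hmemU y hym hyc
            have hxs : x ∈ cs.slab SS := by
              rcases ih x hxm with ⟨Z', hZ'⟩ | h
              · exact absurd ⟨Z', cs.widePre_of_subset hZ' (hZ'.1.trans hxU)⟩ hw
              · exact h
            have hys : y ∈ cs.slab SS := by
              rcases ih y hym with ⟨Z', hZ'⟩ | h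
              · exact absurd ⟨Z', cs.widePre_of_subset hZ' (hZ'.1.trans hyU)⟩ hw
              · exact h
            obtain ⟨Z', hZ'⟩ := cs.slab_pair hxs hys hnexy hxy
            exact hw ⟨Z', cs.widePre_of_subset hZ'
              (hZ'.1.trans (Set.union_subset hxU hyU))⟩
        have hUT : U = T₀ := by
          apply Set.Subset.antisymm
          · intro u hu
            rw [hUdef, Set.mem_sUnion] at hu
            obtain ⟨Z, ⟨hZ, hch⟩, huZ⟩ := hu
            exact (hall Z hZ hch) ▸ huZ
          · exact hmemU T₀ hT₀ (Relation.EqvGen.refl T₀)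
        rcases ih T₀ hT₀ with ⟨Z', hZ'⟩ | h
        · exact absurd ⟨Z', hUT ▸ hZ'⟩ hw
        · exact Or.inr (hUT ▸ h)

theorem wide_self {T : Set B} (h : cs.IsWidePre T T) : T ∈ cs.wide T :=
  ⟨h, fun T' hT' hsub => Set.Subset.antisymm hsub hT'.1⟩

theorem hidx_eq {SS : Set B} {k : ℕ} (hw : (cs.wide SS).Nonempty)
    (hmem : SS ∈ cs.lambdaSet SS k) (hmin : ∀ j < k, SS ∉ cs.lambdaSet SS j) :
    cs.hypergraphIndex SS = (k : ℕ∞) := by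
  unfold hypergraphIndex
  rw [if_neg (Set.nonempty_iff_ne_empty.mp hw)]
  apply le_antisymm
  · exact sInf_le ⟨k, rfl, hmem⟩
  · refine le_sInf ?_
    rintro b ⟨j, rfl, hj⟩
    exact_mod_cast Nat.cast_le.mpr (not_lt.mp (fun hlt => hmin j hlt hj))

theorem hidx_spec {SS : Set B} {k : ℕ} (h : cs.hypergraphIndex SS = (k : ℕ∞)) :
    (cs.wide SS).Nonempty ∧ SS ∈ cs.lambdaSet SS k ∧
      ∀ j < k, SS ∉ cs.lambdaSet SS j := by
  unfold hypergraphIndex at h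
  by_cases hw : cs.wide SS = ∅
  · rw [if_pos hw] at h
    exact absurd h.symm (ENat.coe_ne_top k)
  · rw [if_neg hw] at h
    have hA : {n : ℕ | SS ∈ cs.lambdaSet SS n}.Nonempty := by
      by_contra hA
      rw [Set.not_nonempty_iff_eq_empty] at hA
      have : {n : ℕ∞ | ∃ h : ℕ, n = (h : ℕ∞) ∧ SS ∈ cs.lambdaSet SS h} = ∅ := by
        ext n
        simp only [Set.mem_setOf_eq, Set.mem_empty_iff_false, iff_false]
        rintro ⟨m, rfl, hm⟩
        exact absurd hm (by simp [Set.eq_empty_iff_forall_notMem] at hA; exact hA m)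
      rw [this, sInf_empty] at h
      exact absurd h.symm (ENat.coe_ne_top k)
    set m := sInf {n : ℕ | SS ∈ cs.lambdaSet SS n} with hm
    have hmmem : SS ∈ cs.lambdaSet SS m := Nat.sInf_mem hA
    have heq : sInf {n : ℕ∞ | ∃ h : ℕ, n = (h : ℕ∞) ∧ SS ∈ cs.lambdaSet SS h}
        = (m : ℕ∞) := by
      apply le_antisymm
      · exact sInf_le ⟨m, rfl, hmmem⟩
      · refine le_sInf ?_
        rintro b ⟨j, rfl, hj⟩
        exact_mod_cast Nat.cast_le.mpr (Nat.sInf_le hj)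
    rw [heq] at h
    have hkm : k = m := by exact_mod_cast h.symm
    subst hkm
    refine ⟨Set.nonempty_iff_ne_empty.mpr hw, hmmem, ?_⟩
    intro j hj hmem
    exact absurd (Nat.sInf_le hmem) (not_le.mpr hj)

/-- The key step: dropping the hypergraph index by exactly one on a proper subset. -/
theorem hidx_step [Finite B] {SS : Set B} {k : ℕ}
    (h : cs.hypergraphIndex SS = ((k + 1 : ℕ) : ℕ∞)) :
    ∃ T, T ⊂ SS ∧ cs.hypergraphIndex T = (k : ℕ∞) := by
  obtain ⟨hw, hmem, hmin⟩ := cs.hidx_spec h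
  rcases k with _ | m
  · -- `k = 0`: take any wide subset
    obtain ⟨W₀, hW₀⟩ := hw
    have hpre : cs.IsWidePre SS W₀ := hW₀.1
    have hWSS : W₀ ⊆ SS := hpre.1
    have hWne : W₀ ≠ SS := by
      rintro rfl
      exact hmin 0 Nat.one_pos (Or.inl hW₀)
    have hself : W₀ ∈ cs.wide W₀ := cs.wide_self (cs.widePre_of_subset hpre subset_rfl)
    refine ⟨W₀, ssubset_of_subset_of_ne hWSS hWne, ?_⟩
    exact cs.hidx_eq ⟨W₀, hself⟩ (Or.inl hself) (fun j hj => absurd hj (Nat.not_lt_zero j))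
  · -- `k = m + 1 ≥ 1`
    obtain ⟨T₀, hT₀, hU⟩ := hmem
    -- find a class member not covered by any `Λ_m` element
    have hstar : ∃ T, T ∈ cs.lambdaSet SS (m+1) ∧
        Relation.EqvGen (cs.lambdaRel (cs.lambdaSet SS (m+1))) T₀ T ∧
        ¬ ∃ Y ∈ cs.lambdaSet SS m, T ⊆ Y := by
      by_contra hcon
      push_neg at hcon
      classical
      set y : Set B → Set B := fun X =>
        if h : ∃ Y ∈ cs.lambdaSet SS m, X ⊆ Y then h.choose else X with hy
      have hyP : ∀ X : Set B, (∃ Y ∈ cs.lambdaSet SS m, X ⊆ Y) →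
          y X ∈ cs.lambdaSet SS m ∧ X ⊆ y X := by
        intro X hX
        rw [hy]
        simp only [dif_pos hX]
        exact ⟨hX.choose_spec.1, hX.choose_spec.2⟩
      have hmap : ∀ b, Relation.EqvGen (cs.lambdaRel (cs.lambdaSet SS (m+1))) T₀ b →
          Relation.EqvGen (cs.lambdaRel (cs.lambdaSet SS m)) (y T₀) (y b) := by
        refine eqvGen_map ?_
        rintro a b hTa ⟨ha, hb, hns⟩
        have hTb := hTa.trans _ _ _ (Relation.EqvGen.rel _ _ ⟨ha, hb, hns⟩)
        obtain ⟨hya, hay⟩ := hyP a (hcon a ha hTa)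
        obtain ⟨hyb, hby⟩ := hyP b (hcon b hb hTb)
        exact ⟨hya, hyb, cs.nsph_mono hns (Set.inter_subset_inter hay hby)⟩
      have hyT₀ := hyP T₀ (hcon T₀ hT₀ (Relation.EqvGen.refl T₀))
      have hSS : SS ∈ cs.lambdaSet SS (m+1) := by
        refine ⟨y T₀, hyT₀.1, ?_⟩
        apply Set.Subset.antisymm
        · intro x hx
          rw [hU, Set.mem_sUnion] at hx
          obtain ⟨T, ⟨hT, hch⟩, hxT⟩ := hx
          obtain ⟨hyT, hTy⟩ := hyP T (hcon T hT hch)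
          have hm' : y T ∈ {T' | T' ∈ cs.lambdaSet SS m ∧
              Relation.EqvGen (cs.lambdaRel (cs.lambdaSet SS m)) (y T₀) T'} :=
            ⟨hyT, hmap T hch⟩
          exact Set.subset_sUnion_of_mem hm' (hTy hxT)
        · intro x hx
          rw [Set.mem_sUnion] at hx
          obtain ⟨T, ⟨hT, -⟩, hxT⟩ := hx
          exact cs.lambda_subset m T hT hxT
      exact hmin (m+1) (Nat.lt_succ_self _) hSS
    obtain ⟨T, hT, hch, hnocover⟩ := hstar
    have hTSS : T ⊆ SS := cs.lambda_subset (m+1) T hT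
    have hTne : T ≠ SS := by
      rintro rfl
      exact hmin (m+1) (Nat.lt_succ_self _) hT
    refine ⟨T, ssubset_of_subset_of_ne hTSS hTne, ?_⟩
    have hrestr : T ∈ cs.lambdaSet T (m+1) := cs.lambda_restrict (m+1) hT subset_rfl hTSS
    have hwide : (cs.wide T).Nonempty := by
      rcases cs.wide_or_slab (m+1) T hT with ⟨Z, hZ⟩ | hslab
      · obtain ⟨Z', hZ', -⟩ := cs.exists_wide_ext hZ
        exact ⟨Z', hZ'⟩
      · exfalso
        obtain ⟨Y, hY, hTY⟩ := cs.lambda_up (Nat.zero_le m) (Or.inr hslab)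
        exact hnocover ⟨Y, hY, hTY⟩
    refine cs.hidx_eq hwide hrestr ?_
    intro j hj hjmem
    obtain ⟨Y, hY, hTY⟩ := cs.lambda_mono hTSS j T hjmem
    obtain ⟨Y', hY', hYY'⟩ := cs.lambda_up (Nat.lt_succ_iff.mp hj) hY
    exact hnocover ⟨Y', hY', hTY.trans hYY'⟩

end CoxeterSystem

theorem exists_chain_of_hypergraphIndex
    [Finite B] (cs : CoxeterSystem M W) (h : ℕ) (hpos : 1 ≤ h)
    (hidx : cs.hypergraphIndex Set.univ = (h : ℕ∞)) :
    (∃ T : Set B, T ⊂ Set.univ ∧ cs.hypergraphIndex T = ((h - 1 : ℕ) : ℕ∞)) ∧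
    ∃ c : ℕ → Set B, c 0 = Set.univ ∧ (∀ i < h, c (i + 1) ⊂ c i) ∧
      ∀ i ≤ h, cs.hypergraphIndex (c i) = ((h - i : ℕ) : ℕ∞) := by
  classical
  constructor
  · have h1 : cs.hypergraphIndex Set.univ = (((h - 1) + 1 : ℕ) : ℕ∞) := by
      rw [hidx]
      congr 1
      omega
    obtain ⟨T, hT, hTi⟩ := cs.hidx_step h1
    exact ⟨T, hT, hTi⟩
  · set c : ℕ → Set B := fun n => Nat.rec (motive := fun _ => Set B) Set.univ
      (fun n prev =>
        if hd : ∃ T, T ⊂ prev ∧ cs.hypergraphIndex T = ((h - (n+1) : ℕ) : ℕ∞) then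
          hd.choose else prev) n with hc
    have hc0 : c 0 = Set.univ := rfl
    have hcs : ∀ n : ℕ, c (n+1) =
        if hd : ∃ T, T ⊂ c n ∧ cs.hypergraphIndex T = ((h - (n+1) : ℕ) : ℕ∞) then
          hd.choose else c n := fun n => rfl
    have main : ∀ n, n ≤ h → cs.hypergraphIndex (c n) = ((h - n : ℕ) : ℕ∞) := by
      intro n
      induction n with
      | zero => intro _; rw [hc0]; simpa using hidx
      | succ n ihn =>
          intro hle
          have ih := ihn (Nat.le_of_succ_le hle)
          have hstep : cs.hypergraphIndex (c n) = (((h - (n+1)) + 1 : ℕ) : ℕ∞) := by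
            rw [ih]
            congr 1
            omega
          have hd : ∃ T, T ⊂ c n ∧ cs.hypergraphIndex T = ((h - (n+1) : ℕ) : ℕ∞) :=
            cs.hidx_step hstep
          rw [hcs n, dif_pos hd]
          exact hd.choose_spec.2
    refine ⟨c, hc0, ?_, fun i hi => main i hi⟩
    intro i hilt
    have ih := main i (le_of_lt hilt)
    have hstep : cs.hypergraphIndex (c i) = (((h - (i+1)) + 1 : ℕ) : ℕ∞) := by
      rw [ih]
      congr 1
      omega
    have hd : ∃ T, T ⊂ c i ∧ cs.hypergraphIndex T = ((h - (i+1) : ℕ) : ℕ∞) :=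
      cs.hidx_step hstep
    rw [hcs i, dif_pos hd]
    exact hd.choose_spec.1
end
end

section
/- Let (W,S) be a Coxeter system in which, for some i ≥ 0, every element of Λ_i(S) is of the form A × K with A minimal nonspherical and K spherical. Then every ≡_i-equivalence class in Λ_i(S) is a singleton, and consequently Λ_j(S) = Λ_i(S) for all j ≥ i. -/
open scoped Classical in
noncomputable section

variable {B W : Type*} [Group W] {M : CoxeterMatrix B}

/-!
STATEMENT 12: If, for some `i`, every element of `Λᵢ(S)` is of the form `A × K`
with `A` minimal nonspherical and `K` spherical, then every `≡ᵢ`-equivalence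
class in `Λᵢ(S)` is a singleton, and `Λⱼ(S) = Λᵢ(S)` for all `j ≥ i`.
-/

section Aux

open Pointwise

variable [Finite B] (cs : CoxeterSystem M W)

lemma HGI.spherical_mono {C D : Set B} (h : C ⊆ D) (hD : cs.IsSpherical D) :
    cs.IsSpherical C := by
  have hle : (cs.specialSubgroup C : Set W) ⊆ (cs.specialSubgroup D : Set W) :=
    Subgroup.closure_mono (Set.image_mono h)
  haveI : Finite (cs.specialSubgroup D) := hD
  have hDf : (cs.specialSubgroup D : Set W).Finite := Set.toFinite _
  exact (hDf.subset hle).to_subtype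

lemma HGI.commute_closure {s t : Set W} (h : ∀ a ∈ s, ∀ b ∈ t, Commute a b)
    {x y : W} (hx : x ∈ Subgroup.closure s) (hy : y ∈ Subgroup.closure t) :
    Commute x y := by
  have h1 : Subgroup.closure s ≤ Subgroup.centralizer t := by
    rw [Subgroup.closure_le]
    intro a ha
    exact Subgroup.mem_centralizer_iff.mpr fun b hb => ((h a ha b hb).symm).eq
  have h2 : Subgroup.closure t ≤ Subgroup.centralizer {x} := by
    rw [Subgroup.closure_le]
    intro b hb
    refine Subgroup.mem_centralizer_iff.mpr ?_
    intro z hz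
    rcases hz with rfl
    exact (Subgroup.mem_centralizer_iff.mp (h1 hx) b hb).symm
  exact Subgroup.mem_centralizer_iff.mp (h2 hy) x rfl

lemma HGI.spherical_union {A K : Set B} (hc : cs.SetsCommute A K)
    (hA : cs.IsSpherical A) (hK : cs.IsSpherical K) :
    cs.IsSpherical (A ∪ K) := by
  set H := cs.specialSubgroup A with hH
  set N := cs.specialSubgroup K with hN
  haveI : Finite H := hA
  haveI : Finite N := hK
  have hcom : ∀ x ∈ H, ∀ y ∈ N, Commute x y := by
    intro x hx y hy
    refine HGI.commute_closure (s := cs.simple '' A) (t := cs.simple '' K) ?_ hx hy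
    rintro a ⟨a0, ha0, rfl⟩ b ⟨b0, hb0, rfl⟩
    exact hc a0 ha0 b0 hb0
  let P : Subgroup W :=
  { carrier := (H : Set W) * (N : Set W)
    one_mem' := ⟨1, H.one_mem, 1, N.one_mem, one_mul 1⟩
    mul_mem' := by
      rintro _ _ ⟨h1, hh1, k1, hk1, rfl⟩ ⟨h2, hh2, k2, hk2, rfl⟩
      exact ⟨h1 * h2, H.mul_mem hh1 hh2, k1 * k2, N.mul_mem hk1 hk2,
        ((hcom h2 hh2 k1 hk1).symm.mul_mul_mul_comm h1 k2).symm⟩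
    inv_mem' := by
      rintro _ ⟨h1, hh1, k1, hk1, rfl⟩
      refine ⟨h1⁻¹, H.inv_mem hh1, k1⁻¹, N.inv_mem hk1, ?_⟩
      rw [mul_inv_rev]
      exact ((hcom h1 hh1 k1 hk1).inv_inv).eq }
  have hle : cs.specialSubgroup (A ∪ K) ≤ P := by
    rw [CoxeterSystem.specialSubgroup, Subgroup.closure_le, Set.image_union]
    rintro x (hx | hx)
    · exact ⟨x, Subgroup.subset_closure hx, 1, N.one_mem, mul_one x⟩
    · exact ⟨1, H.one_mem, x, Subgroup.subset_closure hx, one_mul x⟩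
  have hHf : (H : Set W).Finite := Set.toFinite _
  have hNf : (N : Set W).Finite := Set.toFinite _
  have hPf : ((H : Set W) * (N : Set W)).Finite := hHf.mul hNf
  have : ((cs.specialSubgroup (A ∪ K) : Set W)).Finite := hPf.subset hle
  exact this.to_subtype

lemma HGI.spherical_empty : cs.IsSpherical (∅ : Set B) := by
  unfold CoxeterSystem.IsSpherical CoxeterSystem.specialSubgroup
  rw [Set.image_empty, Subgroup.closure_empty]
  infer_instance

lemma HGI.nonempty_of_nonspherical {A : Set B} (h : ¬ cs.IsSpherical A) :
    A.Nonempty := by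
  rw [Set.nonempty_iff_ne_empty]
  rintro rfl
  exact h (HGI.spherical_empty cs)

/-- The absorption lemma: a nonspherical subset of `A ∪ K` contains `A`. -/
lemma HGI.absorb {A K U : Set B} (hc : cs.SetsCommute A K)
    (hA : cs.MinimalNonspherical A) (hK : cs.IsSpherical K)
    (hU : U ⊆ A ∪ K) (hns : ¬ cs.IsSpherical U) : A ⊆ U := by
  by_contra hAU
  apply hns
  have hss : U ∩ A ⊂ A := by
    refine (Set.ssubset_iff_subset_ne).mpr ⟨Set.inter_subset_right, fun h => hAU ?_⟩
    exact h ▸ Set.inter_subset_left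
  have h1 : cs.IsSpherical (U ∩ A) := hA.2 _ hss
  have h2 : cs.IsSpherical (U ∩ K) :=
    HGI.spherical_mono cs Set.inter_subset_right hK
  have hc' : cs.SetsCommute (U ∩ A) (U ∩ K) := fun a ha b hb =>
    hc a ha.2 b hb.2
  have := HGI.spherical_union cs hc' h1 h2
  have hUeq : (U ∩ A) ∪ (U ∩ K) = U := by
    rw [← Set.inter_union_distrib_left, Set.inter_eq_left.mpr hU]
  rwa [hUeq] at this

lemma HGI.lambda0_nonspherical {U : Set B} (hU : U ∈ cs.lambdaSet Set.univ 0) :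
    ¬ cs.IsSpherical U := by
  intro hsph
  rcases hU with hU | hU
  · obtain ⟨⟨-, A2, K2, rfl, -, -, hcase⟩, -⟩ := hU
    rcases hcase with ⟨hA2, -⟩ | ⟨hA2, -⟩
    · exact hA2 (HGI.spherical_mono cs Set.subset_union_left hsph)
    · exact hA2.2.1.1 (HGI.spherical_mono cs Set.subset_union_left hsph)
  · obtain ⟨⟨-, A3, K3, rfl, -, -, hA3, -⟩, -⟩ := hU
    exact hA3.1 (HGI.spherical_mono cs Set.subset_union_left hsph)

/-- If a wide set admits a (minimal nonspherical) × (spherical) decomposition,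
then its nonspherical part is irreducible affine of rank ≥ 3. -/
lemma HGI.wide_struct {U A K : Set B} (hU : U ∈ cs.wide Set.univ)
    (hUe : U = A ∪ K) (hd : Disjoint A K) (hc : cs.SetsCommute A K)
    (hA : cs.MinimalNonspherical A) (hK : cs.IsSpherical K) :
    cs.IsIrredAffineRankGE3 A := by
  obtain ⟨⟨-, A2, K2, hUe2, hd2, hc2, hcase⟩, -⟩ := hU
  have hAne : A.Nonempty := HGI.nonempty_of_nonspherical cs hA.1
  rcases hcase with ⟨hA2, hK2⟩ | ⟨hA2, hK2⟩
  · have h1 : A ⊆ A2 := HGI.absorb cs hc hA hK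
      (by rw [← hUe, hUe2]; exact Set.subset_union_left) hA2
    have h2 : A ⊆ K2 := HGI.absorb cs hc hA hK
      (by rw [← hUe, hUe2]; exact Set.subset_union_right) hK2
    obtain ⟨a, ha⟩ := hAne
    exact absurd (h2 ha) (Set.disjoint_left.mp hd2 (h1 ha))
  · have hA2ns : ¬ cs.IsSpherical A2 := hA2.2.1.1
    have hA2sub : A2 ⊆ A ∪ K := by rw [← hUe, hUe2]; exact Set.subset_union_left
    have hAA2 : A ⊆ A2 := HGI.absorb cs hc hA hK hA2sub hA2ns
    have hsplit : (A2 ∩ A) ∪ (A2 ∩ K) = A2 := by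
      rw [← Set.inter_union_distrib_left, Set.inter_eq_left.mpr hA2sub]
    have hdis : Disjoint (A2 ∩ A) (A2 ∩ K) :=
      (hd.mono Set.inter_subset_right Set.inter_subset_right)
    have hcm : cs.SetsCommute (A2 ∩ A) (A2 ∩ K) := fun a ha b hb =>
      hc a ha.2 b hb.2
    rcases hA2.1 _ _ hsplit hdis hcm with h | h
    · exfalso
      obtain ⟨a, ha⟩ := hAne
      exact Set.eq_empty_iff_forall_notMem.mp h a ⟨hAA2 ha, ha⟩
    · have hsub : A2 ⊆ A := by
        intro x hx
        rcases hA2sub hx with hx' | hx'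
        · exact hx'
        · exact (Set.eq_empty_iff_forall_notMem.mp h x ⟨hx, hx'⟩).elim
      have : A2 = A := Set.Subset.antisymm hsub hAA2
      rwa [this] at hA2
lemma HGI.exists_wide_superset {T : Set B} (hT : cs.IsWidePre Set.univ T) :
    ∃ U ∈ cs.wide Set.univ, T ⊆ U := by
  obtain ⟨U, hU, hmax⟩ := Set.Finite.exists_maximalFor id
    {V | cs.IsWidePre Set.univ V ∧ T ⊆ V} (Set.toFinite _) ⟨T, hT, subset_rfl⟩
  exact ⟨U, ⟨hU.1, fun V hV hUV => Set.Subset.antisymm hUV (hmax ⟨hV, hU.2.trans hUV⟩ hUV)⟩, hU.2⟩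

/-- Key level-0 intersection lemma: two elements of `Λ₀` with slab-type
decompositions and nonspherical intersection coincide. -/
lemma HGI.step0 {U U' A K A' K' : Set B}
    (hU : U ∈ cs.lambdaSet Set.univ 0) (hU' : U' ∈ cs.lambdaSet Set.univ 0)
    (hUe : U = A ∪ K) (hd : Disjoint A K) (hc : cs.SetsCommute A K)
    (hA : cs.MinimalNonspherical A) (hK : cs.IsSpherical K)
    (hUe' : U' = A' ∪ K') (hd' : Disjoint A' K') (hc' : cs.SetsCommute A' K')
    (hA' : cs.MinimalNonspherical A') (hK' : cs.IsSpherical K')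
    (hns : ¬ cs.IsSpherical (U ∩ U')) : U = U' := by
  -- A = A'
  have hIT : U ∩ U' ⊆ A ∪ K := hUe ▸ Set.inter_subset_left
  have hIT' : U ∩ U' ⊆ A' ∪ K' := hUe' ▸ Set.inter_subset_right
  have hAsub : A ⊆ U ∩ U' := HGI.absorb cs hc hA hK hIT hns
  have hA'sub : A' ⊆ U ∩ U' := HGI.absorb cs hc' hA' hK' hIT' hns
  have hAA' : A = A' := by
    have h1 : A' ⊆ A := HGI.absorb cs hc' hA' hK' (hAsub.trans hIT') hA.1
    have h2 : A ⊆ A' := HGI.absorb cs hc hA hK (hA'sub.trans hIT) hA'.1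
    exact Set.Subset.antisymm h2 h1
  subst hAA'
  -- the union decomposition
  have hVe : U ∪ U' = A ∪ (K ∪ K') := by
    rw [hUe, hUe']
    rw [Set.union_assoc, ← Set.union_assoc K, Set.union_comm K A, Set.union_assoc,
      ← Set.union_assoc, Set.union_self]
  have hVd : Disjoint A (K ∪ K') := Set.disjoint_union_right.mpr ⟨hd, hd'⟩
  have hVc : cs.SetsCommute A (K ∪ K') := by
    intro a ha b hb
    rcases hb with hb | hb
    · exact hc a ha b hb
    · exact hc' a ha b hb
  have hUsub : U ⊆ U ∪ U' := Set.subset_union_left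
  have hU'sub : U' ⊆ U ∪ U' := Set.subset_union_right
  -- If some `Λ₀`-member is wide, `U ∪ U'` is wide-pre
  have hwidepre : ∀ V ∈ cs.wide Set.univ, (V = A ∪ K ∧ Disjoint A K ∧
      cs.SetsCommute A K ∧ cs.IsSpherical K) ∨ (V = A ∪ K' ∧ Disjoint A K' ∧
      cs.SetsCommute A K' ∧ cs.IsSpherical K') → cs.IsWidePre Set.univ (U ∪ U') := by
    intro V hV hdec
    have hIA : cs.IsIrredAffineRankGE3 A := by
      rcases hdec with ⟨he, h1, h2, h3⟩ | ⟨he, h1, h2, h3⟩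
      · exact HGI.wide_struct cs hV he h1 h2 hA h3
      · exact HGI.wide_struct cs hV he h1 h2 hA h3
    refine ⟨Set.subset_univ _, A, K ∪ K', hVe, hVd, hVc, ?_⟩
    by_cases hs : cs.IsSpherical (K ∪ K')
    · exact Or.inr ⟨hIA, hs⟩
    · exact Or.inl ⟨hA.1, hs⟩
  -- slabs forbid wide supersets
  have hslabnot : ∀ V ∈ cs.slab Set.univ, ¬ ∃ T' ∈ cs.wide Set.univ, V ⊆ T' := by
    rintro V hV
    obtain ⟨⟨-, A3, K3, -, -, -, -, -, -, hnw⟩, -⟩ := hV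
    exact hnw
  rcases hU with hUw | hUs
  · rcases hU' with hU'w | hU's
    · -- wide, wide
      have hwp : cs.IsWidePre Set.univ (U ∪ U') :=
        hwidepre U hUw (Or.inl ⟨hUe, hd, hc, hK⟩)
      have h1 : U = U ∪ U' := hUw.2 _ hwp hUsub
      have h2 : U' = U ∪ U' := hU'w.2 _ hwp hU'sub
      exact h1.trans h2.symm
    · -- wide, slab : contradiction
      have hwp : cs.IsWidePre Set.univ (U ∪ U') :=
        hwidepre U hUw (Or.inl ⟨hUe, hd, hc, hK⟩)
      obtain ⟨V, hVw, hVsub⟩ := HGI.exists_wide_superset cs hwp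
      exact (hslabnot U' hU's ⟨V, hVw, hU'sub.trans hVsub⟩).elim
  · rcases hU' with hU'w | hU's
    · -- slab, wide : contradiction
      have hwp : cs.IsWidePre Set.univ (U ∪ U') :=
        hwidepre U' hU'w (Or.inr ⟨hUe', hd', hc', hK'⟩)
      obtain ⟨V, hVw, hVsub⟩ := HGI.exists_wide_superset cs hwp
      exact (hslabnot U hUs ⟨V, hVw, hUsub.trans hVsub⟩).elim
    · -- slab, slab
      by_cases hKK : K ∪ K' = ∅
      · have hK0 : K = ∅ := Set.subset_eq_empty (Set.subset_union_left.trans hKK.subset) rfl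
        have hK0' : K' = ∅ := Set.subset_eq_empty (Set.subset_union_right.trans hKK.subset) rfl
        rw [hUe, hUe', hK0, hK0']
      by_cases hs : cs.IsSpherical (K ∪ K')
      · by_cases hw : ∃ V ∈ cs.wide Set.univ, U ∪ U' ⊆ V
        · obtain ⟨V, hVw, hVsub⟩ := hw
          exact (hslabnot U hUs ⟨V, hVw, hUsub.trans hVsub⟩).elim
        · have hsp : cs.IsSlabPre Set.univ (U ∪ U') :=
            ⟨Set.subset_univ _, A, K ∪ K', hVe, hVd, hVc, hA,
              Set.nonempty_iff_ne_empty.mpr hKK, hs, hw⟩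
          have h1 : U = U ∪ U' := hUs.2 _ hsp hUsub
          have h2 : U' = U ∪ U' := hU's.2 _ hsp hU'sub
          exact h1.trans h2.symm
      · have hwp : cs.IsWidePre Set.univ (U ∪ U') :=
          ⟨Set.subset_univ _, A, K ∪ K', hVe, hVd, hVc, Or.inl ⟨hA.1, hs⟩⟩
        obtain ⟨V, hVw, hVsub⟩ := HGI.exists_wide_superset cs hwp
        exact (hslabnot U hUs ⟨V, hVw, hUsub.trans hVsub⟩).elim
/-- Every element of `Λᵢ` is a union of elements of `Λ₀`. -/
lemma HGI.lambda_decomp (i : ℕ) : ∀ T ∈ cs.lambdaSet Set.univ i,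
    (∃ U ∈ cs.lambdaSet Set.univ 0, U ⊆ T) ∧
    ∀ x ∈ T, ∃ U ∈ cs.lambdaSet Set.univ 0, U ⊆ T ∧ x ∈ U := by
  induction i with
  | zero =>
    intro T hT
    exact ⟨⟨T, hT, subset_rfl⟩, fun x hx => ⟨T, hT, subset_rfl, hx⟩⟩
  | succ i ih =>
    rintro T ⟨T0, hT0, rfl⟩
    have hT0mem : T0 ∈ {T' | T' ∈ cs.lambdaSet Set.univ i ∧
        Relation.EqvGen (cs.lambdaRel (cs.lambdaSet Set.univ i)) T0 T'} :=
      ⟨hT0, Relation.EqvGen.refl T0⟩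
    constructor
    · obtain ⟨U, hU, hsub⟩ := (ih T0 hT0).1
      exact ⟨U, hU, hsub.trans (Set.subset_sUnion_of_mem hT0mem)⟩
    · intro x hx
      obtain ⟨T', hT'mem, hxT'⟩ := hx
      obtain ⟨U, hU, hsub, hxU⟩ := (ih T' hT'mem.1).2 x hxT'
      exact ⟨U, hU, hsub.trans (Set.subset_sUnion_of_mem hT'mem), hxU⟩

/-- The single-step intersection lemma at level `i`, under the hypothesis that
all elements of `Λᵢ` have slab form. -/
lemma HGI.step (i : ℕ)
    (hform : ∀ T ∈ cs.lambdaSet Set.univ i, ∃ A K : Set B,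
      T = A ∪ K ∧ Disjoint A K ∧ cs.SetsCommute A K ∧
      cs.MinimalNonspherical A ∧ cs.IsSpherical K)
    {T T' : Set B} (hT : T ∈ cs.lambdaSet Set.univ i)
    (hT' : T' ∈ cs.lambdaSet Set.univ i)
    (hns : ¬ cs.IsSpherical (T ∩ T')) : T = T' := by
  obtain ⟨A, K, hTe, hd, hc, hA, hK⟩ := hform T hT
  obtain ⟨A', K', hTe', hd', hc', hA', hK'⟩ := hform T' hT'
  have hIT : T ∩ T' ⊆ A ∪ K := hTe ▸ Set.inter_subset_left
  have hIT' : T ∩ T' ⊆ A' ∪ K' := hTe' ▸ Set.inter_subset_right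
  have hAsub : A ⊆ T ∩ T' := HGI.absorb cs hc hA hK hIT hns
  have hA'sub : A' ⊆ T ∩ T' := HGI.absorb cs hc' hA' hK' hIT' hns
  have hAA' : A = A' := by
    have h1 : A' ⊆ A := HGI.absorb cs hc' hA' hK' (hAsub.trans hIT') hA.1
    have h2 : A ⊆ A' := HGI.absorb cs hc hA hK (hA'sub.trans hIT) hA'.1
    exact Set.Subset.antisymm h2 h1
  subst hAA'
  -- every `Λ₀` element inside `T` equals every `Λ₀` element inside `T'`
  have key : ∀ U ∈ cs.lambdaSet Set.univ 0, U ⊆ T →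
      ∀ U' ∈ cs.lambdaSet Set.univ 0, U' ⊆ T' → U = U' := by
    intro U hU hUT U' hU' hU'T'
    have hUns := HGI.lambda0_nonspherical cs hU
    have hU'ns := HGI.lambda0_nonspherical cs hU'
    have hUAK : U ⊆ A ∪ K := hUT.trans hTe.subset
    have hU'AK : U' ⊆ A ∪ K' := hU'T'.trans hTe'.subset
    have hAU : A ⊆ U := HGI.absorb cs hc hA hK hUAK hUns
    have hAU' : A ⊆ U' := HGI.absorb cs hc' hA' hK' hU'AK hU'ns
    have hUeq : U = A ∪ (U ∩ K) := by
      apply Set.Subset.antisymm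
      · intro x hx
        rcases hUAK hx with h | h
        · exact Or.inl h
        · exact Or.inr ⟨hx, h⟩
      · exact Set.union_subset hAU Set.inter_subset_left
    have hU'eq : U' = A ∪ (U' ∩ K') := by
      apply Set.Subset.antisymm
      · intro x hx
        rcases hU'AK hx with h | h
        · exact Or.inl h
        · exact Or.inr ⟨hx, h⟩
      · exact Set.union_subset hAU' Set.inter_subset_left
    have hUU'ns : ¬ cs.IsSpherical (U ∩ U') := by
      intro h
      exact hA.1 (HGI.spherical_mono cs (Set.subset_inter hAU hAU') h)
    exact HGI.step0 cs hU hU' hUeq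
      (hd.mono_right Set.inter_subset_right)
      (fun a ha b hb => hc a ha b hb.2) hA
      (HGI.spherical_mono cs Set.inter_subset_right hK)
      hU'eq (hd'.mono_right Set.inter_subset_right)
      (fun a ha b hb => hc' a ha b hb.2) hA'
      (HGI.spherical_mono cs Set.inter_subset_right hK') hUU'ns
  obtain ⟨U0, hU0, hU0T⟩ := (HGI.lambda_decomp cs i T hT).1
  obtain ⟨U0', hU0', hU0'T'⟩ := (HGI.lambda_decomp cs i T' hT').1
  have hTsub : T ⊆ U0' := by
    intro x hx
    obtain ⟨U, hU, hUT, hxU⟩ := (HGI.lambda_decomp cs i T hT).2 x hx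
    exact (key U hU hUT U0' hU0' hU0'T') ▸ hxU
  have hT'sub : T' ⊆ U0 := by
    intro x hx
    obtain ⟨U', hU', hU'T', hxU'⟩ := (HGI.lambda_decomp cs i T' hT').2 x hx
    exact (key U0 hU0 hU0T U' hU' hU'T').symm ▸ hxU'
  exact Set.Subset.antisymm (hTsub.trans hU0'T') (hT'sub.trans hU0T)

end Aux

theorem lambdaSet_stabilises_of_all_slab_form
    [Finite B] (cs : CoxeterSystem M W) (i : ℕ)
    (hform : ∀ T ∈ cs.lambdaSet Set.univ i, ∃ A K : Set B,
      T = A ∪ K ∧ Disjoint A K ∧ cs.SetsCommute A K ∧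
      cs.MinimalNonspherical A ∧ cs.IsSpherical K) :
    (∀ T ∈ cs.lambdaSet Set.univ i, ∀ T' ∈ cs.lambdaSet Set.univ i,
      Relation.EqvGen (cs.lambdaRel (cs.lambdaSet Set.univ i)) T T' → T = T') ∧
    ∀ j : ℕ, i ≤ j → cs.lambdaSet Set.univ j = cs.lambdaSet Set.univ i := by
  
  have heqv : ∀ T T' : Set B,
      Relation.EqvGen (cs.lambdaRel (cs.lambdaSet Set.univ i)) T T' → T = T' := by
    intro T T' h
    induction h with
    | rel _ _ h => exact HGI.step cs i hform h.1 h.2.1 h.2.2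
    | refl _ => rfl
    | symm _ _ _ ih => exact ih.symm
    | trans _ _ _ _ _ ih1 ih2 => exact ih1.trans ih2
  refine ⟨fun T _ T' _ h => heqv T T' h, ?_⟩
  have hsucc : ∀ k : ℕ, cs.lambdaSet (Set.univ : Set B) (k + 1) =
      {U | ∃ T ∈ cs.lambdaSet Set.univ k,
        U = ⋃₀ {T' | T' ∈ cs.lambdaSet Set.univ k ∧
          Relation.EqvGen (cs.lambdaRel (cs.lambdaSet Set.univ k)) T T'}} :=
    fun k => rfl
  have hone : cs.lambdaSet (Set.univ : Set B) (i + 1) = cs.lambdaSet Set.univ i := by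
    rw [hsucc i]
    ext U
    constructor
    · rintro ⟨T0, hT0, rfl⟩
      have hcl : {T' | T' ∈ cs.lambdaSet Set.univ i ∧
          Relation.EqvGen (cs.lambdaRel (cs.lambdaSet Set.univ i)) T0 T'} = {T0} := by
        ext V
        constructor
        · rintro ⟨hV, hrel⟩
          exact (heqv _ _ hrel).symm
        · rintro rfl
          exact ⟨hT0, Relation.EqvGen.refl _⟩
      rw [hcl, Set.sUnion_singleton]
      exact hT0
    · intro hU
      refine ⟨U, hU, ?_⟩
      have hcl : {T' | T' ∈ cs.lambdaSet Set.univ i ∧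
          Relation.EqvGen (cs.lambdaRel (cs.lambdaSet Set.univ i)) U T'} = {U} := by
        ext V
        constructor
        · rintro ⟨hV, hrel⟩
          exact (heqv _ _ hrel).symm
        · rintro rfl
          exact ⟨hU, Relation.EqvGen.refl _⟩
      rw [hcl, Set.sUnion_singleton]
  intro j hj
  induction j, hj using Nat.le_induction with
  | base => rfl
  | succ j hj ih =>
    rw [hsucc j, ih, ← hsucc i, hone]
end
end

section
/- Let (W,S) be a Coxeter system whose Dynkin diagram Δ is a tree (more generally a forest), and suppose: Λ₀(S) is nonempty, S ∉ Λ₀(S), and there exist two distinct vertices s, t ∈ S such that deleting s (respectively t) from Δ leaves at least two nonspherical components. Then the hypergraph index of (W,S) equals 1. -/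
open scoped Classical in
noncomputable section

variable {B W : Type*} [Group W] {M : CoxeterMatrix B}

/-- The Dynkin diagram of a Coxeter matrix: vertices are the generators, with an
edge between `u ≠ v` whenever `M u v ≠ 2` (labels `≥ 3` or `∞`). -/
def CoxeterMatrix.dynkinGraph (M : CoxeterMatrix B) : SimpleGraph B where
  Adj u v := u ≠ v ∧ M u v ≠ 2
  symm := ⟨by
    intro u v h
    exact ⟨h.1.symm, by rw [M.symmetric]; exact h.2⟩⟩
  loopless := ⟨fun u h => h.1 rfl⟩

/-- Deleting the vertex `s` from the Dynkin diagram leaves at least two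
nonspherical connected components. -/
def HasTwoNonsphericalComponents (cs : CoxeterSystem M W) (s : B) : Prop :=
  ∃ c₁ c₂ : (M.dynkinGraph.induce {v : B | v ≠ s}).ConnectedComponent,
    c₁ ≠ c₂ ∧ ¬ cs.IsSpherical (Subtype.val '' c₁.supp) ∧
      ¬ cs.IsSpherical (Subtype.val '' c₂.supp)

/-!
STATEMENT 17: If the Dynkin diagram is a forest, `Λ₀(S)` is nonempty,
`S ∉ Λ₀(S)`, and there are two distinct vertices `s ≠ t` whose deletion each
leaves at least two nonspherical components, then the hypergraph index is `1`.
-/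

private lemma nonspherical_mono (cs : CoxeterSystem M W) {A K : Set B}
    (h : A ⊆ K) (hA : ¬ cs.IsSpherical A) : ¬ cs.IsSpherical K := by
  intro hK
  apply hA
  have hle : cs.specialSubgroup A ≤ cs.specialSubgroup K :=
    Subgroup.closure_mono (Set.image_mono h)
  have : Finite (cs.specialSubgroup K) := hK
  exact Finite.of_injective (Subgroup.inclusion hle) (Subgroup.inclusion_injective hle)

private lemma commute_of_M_eq_two (cs : CoxeterSystem M W) {a k : B} (h : M a k = 2) :
    Commute (cs.simple a) (cs.simple k) := by
  have h1 := cs.simple_mul_simple_pow a k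
  rw [h, pow_two] at h1
  have h2 : cs.simple a * cs.simple k = (cs.simple a * cs.simple k)⁻¹ :=
    eq_inv_of_mul_eq_one_left h1
  show cs.simple a * cs.simple k = cs.simple k * cs.simple a
  rw [h2, mul_inv_rev, cs.inv_simple, cs.inv_simple]

/-- From two nonspherical components of the graph minus `s`, the complement of `s`
is a wide subset. -/
private lemma compl_mem_wide (cs : CoxeterSystem M W)
    (hnotin : Set.univ ∉ cs.lambdaSet Set.univ 0)
    (s : B) (hs : HasTwoNonsphericalComponents cs s) :
    ({s}ᶜ : Set B) ∈ cs.wide Set.univ := by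
  classical
  obtain ⟨c₁, c₂, hcc, hns₁, hns₂⟩ := hs
  have hAsub : Subtype.val '' c₁.supp ⊆ ({s}ᶜ : Set B) := by
    rintro x ⟨⟨v, hv⟩, _, rfl⟩
    exact hv
  have hunion : Subtype.val '' c₁.supp ∪ (({s}ᶜ : Set B) \ Subtype.val '' c₁.supp)
      = ({s}ᶜ : Set B) := Set.union_diff_cancel hAsub
  have hdisj : Disjoint (Subtype.val '' c₁.supp)
      (({s}ᶜ : Set B) \ Subtype.val '' c₁.supp) := Set.disjoint_sdiff_right
  have hcomm : cs.SetsCommute (Subtype.val '' c₁.supp)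
      (({s}ᶜ : Set B) \ Subtype.val '' c₁.supp) := by
    rintro a ha k hk
    obtain ⟨⟨a', ha'ne⟩, ha'supp, rfl⟩ := ha
    have hkne : (k : B) ≠ s := hk.1
    have hknotA : k ∉ Subtype.val '' c₁.supp := hk.2
    by_cases hM : M a' k = 2
    · exact commute_of_M_eq_two cs hM
    · exfalso
      have hne : a' ≠ k := by
        rintro rfl
        exact hknotA ⟨⟨a', ha'ne⟩, ha'supp, rfl⟩
      have hadj : (M.dynkinGraph.induce {v : B | v ≠ s}).Adj ⟨a', ha'ne⟩ ⟨k, hkne⟩ :=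
        (⟨hne, hM⟩ : a' ≠ k ∧ M a' k ≠ 2)
      apply hknotA
      refine ⟨⟨k, hkne⟩, ?_, rfl⟩
      rw [SimpleGraph.ConnectedComponent.mem_supp_iff] at ha'supp ⊢
      rw [← ha'supp]
      exact SimpleGraph.ConnectedComponent.sound hadj.symm.reachable
  have hnsK : ¬ cs.IsSpherical (({s}ᶜ : Set B) \ Subtype.val '' c₁.supp) := by
    refine nonspherical_mono cs ?_ hns₂
    rintro x ⟨⟨v, hv⟩, hvsupp, rfl⟩
    refine ⟨hv, ?_⟩
    rintro ⟨⟨w, hw⟩, hwsupp, h⟩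
    apply hcc
    have heq : (⟨w, hw⟩ : {v : B | v ≠ s}) = ⟨v, hv⟩ := Subtype.ext h
    rw [heq] at hwsupp
    rw [SimpleGraph.ConnectedComponent.mem_supp_iff] at hvsupp hwsupp
    rw [← hvsupp, ← hwsupp]
  have hpre : cs.IsWidePre Set.univ ({s}ᶜ : Set B) :=
    ⟨Set.subset_univ _, _, _, hunion.symm, hdisj, hcomm, Or.inl ⟨hns₁, hnsK⟩⟩
  have huniv : ¬ cs.IsWidePre Set.univ (Set.univ : Set B) := by
    intro h
    apply hnotin
    left
    exact ⟨h, fun T' hT' hsub => (Set.eq_univ_of_univ_subset hsub).symm⟩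
  refine ⟨hpre, fun T' hT' hsub => ?_⟩
  by_cases hsT : s ∈ T'
  · exfalso
    apply huniv
    have hTu : T' = Set.univ := by
      apply Set.eq_univ_of_forall
      intro x
      by_cases hx : x = s
      · rwa [hx]
      · exact hsub hx
    rwa [hTu] at hT'
  · refine Set.Subset.antisymm hsub (fun x hx hxs => ?_)
    exact hsT (by rwa [Set.mem_singleton_iff.mp hxs] at hx)

theorem hypergraphIndex_eq_one_of_tree
    [Finite B] (cs : CoxeterSystem M W)
    (htree : M.dynkinGraph.IsAcyclic)
    (hne : (cs.lambdaSet Set.univ 0).Nonempty)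
    (hnotin : Set.univ ∉ cs.lambdaSet Set.univ 0)
    (s t : B) (hst : s ≠ t)
    (hs : HasTwoNonsphericalComponents cs s)
    (ht : HasTwoNonsphericalComponents cs t) :
    cs.hypergraphIndex Set.univ = 1 := by
  classical
  have hTs : ({s}ᶜ : Set B) ∈ cs.wide Set.univ := compl_mem_wide cs hnotin s hs
  have hTt : ({t}ᶜ : Set B) ∈ cs.wide Set.univ := compl_mem_wide cs hnotin t ht
  have hTs0 : ({s}ᶜ : Set B) ∈ cs.lambdaSet Set.univ 0 := Or.inl hTs
  have hTt0 : ({t}ᶜ : Set B) ∈ cs.lambdaSet Set.univ 0 := Or.inl hTt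
  -- the intersection {s,t}ᶜ is nonspherical
  have hint : ¬ cs.IsSpherical (({s}ᶜ : Set B) ∩ ({t}ᶜ : Set B)) := by
    obtain ⟨c₁, c₂, hcc, hns₁, hns₂⟩ := hs
    have key : ∀ c : (M.dynkinGraph.induce {v : B | v ≠ s}).ConnectedComponent,
        ¬ cs.IsSpherical (Subtype.val '' c.supp) → t ∉ Subtype.val '' c.supp →
        ¬ cs.IsSpherical (({s}ᶜ : Set B) ∩ ({t}ᶜ : Set B)) := by
      intro c hns hnt
      refine nonspherical_mono cs ?_ hns
      rintro x ⟨⟨v, hv⟩, hvsupp, rfl⟩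
      refine ⟨hv, ?_⟩
      intro hxt
      exact hnt (Set.mem_singleton_iff.mp hxt ▸ ⟨⟨v, hv⟩, hvsupp, rfl⟩)
    by_cases hmem : t ∈ Subtype.val '' c₁.supp
    · refine key c₂ hns₂ ?_
      rintro ⟨⟨w, hw⟩, hwsupp, rfl⟩
      obtain ⟨⟨v, hv⟩, hvsupp, hvw⟩ := hmem
      apply hcc
      have : (⟨v, hv⟩ : {v : B | v ≠ s}) = ⟨w, hw⟩ := Subtype.ext hvw
      rw [this] at hvsupp
      rw [SimpleGraph.ConnectedComponent.mem_supp_iff] at hvsupp hwsupp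
      rw [← hvsupp, ← hwsupp]
    · exact key c₁ hns₁ hmem
  -- univ ∈ Λ₁
  have hrel : Relation.EqvGen (cs.lambdaRel (cs.lambdaSet Set.univ 0))
      ({s}ᶜ : Set B) ({t}ᶜ : Set B) :=
    Relation.EqvGen.rel _ _ ⟨hTs0, hTt0, hint⟩
  have h1 : (Set.univ : Set B) ∈ cs.lambdaSet Set.univ 1 := by
    refine ⟨({s}ᶜ : Set B), hTs0, ?_⟩
    refine (Set.eq_univ_iff_forall.mpr ?_).symm
    intro x
    by_cases hx : x = s
    · exact ⟨({t}ᶜ : Set B), ⟨hTt0, hrel⟩, by simp [hx]; exact hst⟩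
    · exact ⟨({s}ᶜ : Set B), ⟨hTs0, Relation.EqvGen.refl _⟩, hx⟩
  -- compute the hypergraph index
  unfold CoxeterSystem.hypergraphIndex
  rw [if_neg (Set.nonempty_iff_ne_empty.mp ⟨_, hTs⟩)]
  apply le_antisymm
  · exact sInf_le ⟨1, Nat.cast_one.symm, h1⟩
  · refine le_sInf ?_
    rintro n ⟨h, rfl, hmem⟩
    match h with
    | 0 => exact absurd hmem hnotin
    | (k+1) => exact_mod_cast Nat.succ_le_succ (Nat.zero_le k)
end
end
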